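/- Let H be a finite-dimensional complex Hilbert space and let S and C be unitary linear maps on H that are involutions, i.e. S∘S = id and C∘C = id. Then the fixed subspace of the composition S∘C decomposes as an (internal, orthogonal) direct sum: ker(S∘C − id) = (ker(S − id) ⊓ ker(C − id)) ⊕ (ker(S + id) ⊓ ker(C + id)). In particular, every 1-eigenvector of S∘C is a sum of a common 1-eigenvector of S and C and a common (−1)-eigenvector of S and C. -/

import Mathlib

/-- Let `S` and `C` be unitary involutions on a finite-dimensional complex Hilbert
space `H`. Then the fixed subspace of `S ∘ C` decomposes as the internal orthogonal
direct sum `ker(SC - 1) = (ker(S-1) ⊓ ker(C-1)) ⊔ (ker(S+1) ⊓ ker(C+1))`: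
the subspace equals the (lattice) sup of the two intersections, and the two
intersections are mutually orthogonal. -/
theorem fixed_space_of_product_of_involutions
    {H : Type*} [NormedAddCommGroup H] [InnerProductSpace ℂ H] [FiniteDimensional ℂ H]
    (S C : H →ₗ[ℂ] H)
    (hSunitary : ∀ x y : H, (inner ℂ (S x) (S y) : ℂ) = inner ℂ x y)
    (hCunitary : ∀ x y : H, (inner ℂ (C x) (C y) : ℂ) = inner ℂ x y)
    (hS2 : S * S = 1) (hC2 : C * C = 1) :
    LinearMap.ker (S * C - 1) =
      (LinearMap.ker (S - 1) ⊓ LinearMap.ker (C - 1)) ⊔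
        (LinearMap.ker (S + 1) ⊓ LinearMap.ker (C + 1)) ∧
    ∀ x ∈ LinearMap.ker (S - 1) ⊓ LinearMap.ker (C - 1),
      ∀ y ∈ LinearMap.ker (S + 1) ⊓ LinearMap.ker (C + 1),
        (inner ℂ x y : ℂ) = 0 := by
  constructor
  · apply le_antisymm
    · intro x hx
      rw [LinearMap.mem_ker] at hx
      have hx' : S (C x) = x := by
        have := hx
        simpa [LinearMap.sub_apply, Module.End.mul_apply, sub_eq_zero] using this
      have h2 : S (S (C x)) = C x := by
        have := LinearMap.congr_fun hS2 (C x)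
        simpa [Module.End.mul_apply] using this
      have hSC : S x = C x := by
        have h1 : S (S (C x)) = S x := congrArg S hx'
        rw [h2] at h1; exact h1.symm
      refine Submodule.mem_sup.mpr
        ⟨(2⁻¹ : ℂ) • (x + C x), ?_, (2⁻¹ : ℂ) • (x - C x), ?_, ?_⟩
      · refine Submodule.mem_inf.mpr ⟨?_, ?_⟩
        · rw [LinearMap.mem_ker]
          simp only [LinearMap.sub_apply, Module.End.one_apply, map_smul, map_add, hSC, hx']
          module
        · rw [LinearMap.mem_ker]
          have hC2' : C (C x) = x := by
            have := LinearMap.congr_fun hC2 x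
            simpa [Module.End.mul_apply] using this
          simp only [LinearMap.sub_apply, Module.End.one_apply, map_smul, map_add, hC2']
          module
      · refine Submodule.mem_inf.mpr ⟨?_, ?_⟩
        · rw [LinearMap.mem_ker]
          simp only [LinearMap.add_apply, Module.End.one_apply, map_smul, map_sub, hSC, hx']
          rw [← hSC] at hx'
          module
        · rw [LinearMap.mem_ker]
          have hC2' : C (C x) = x := by
            have := LinearMap.congr_fun hC2 x
            simpa [Module.End.mul_apply] using this
          simp only [LinearMap.add_apply, Module.End.one_apply, map_smul, map_sub, hC2']
          module
      · module
    · apply sup_le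
      · rintro x ⟨hxS, hxC⟩
        rw [LinearMap.mem_ker] at *
        have hS : S x = x := by simpa [LinearMap.sub_apply, sub_eq_zero] using hxS
        have hC : C x = x := by simpa [LinearMap.sub_apply, sub_eq_zero] using hxC
        simp [LinearMap.sub_apply, Module.End.mul_apply, hS, hC, sub_eq_zero]
      · rintro x ⟨hxS, hxC⟩
        rw [LinearMap.mem_ker] at *
        have hS : S x = -x := by
          simpa [LinearMap.add_apply, add_eq_zero_iff_eq_neg] using hxS
        have hC : C x = -x := by
          simpa [LinearMap.add_apply, add_eq_zero_iff_eq_neg] using hxC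
        simp [LinearMap.sub_apply, Module.End.mul_apply, hC, hS, sub_eq_zero]
  · rintro x ⟨hxS, _⟩ y ⟨hyS, _⟩
    have hS : S x = x := by
      have h := hxS
      simp only [SetLike.mem_coe, LinearMap.mem_ker, LinearMap.sub_apply,
        Module.End.one_apply, sub_eq_zero] at h
      exact h
    have hS' : S y = -y := by
      have h := hyS
      simp only [SetLike.mem_coe, LinearMap.mem_ker, LinearMap.add_apply,
        Module.End.one_apply, add_eq_zero_iff_eq_neg] at h
      exact h
    have := hSunitary x y
    rw [hS, hS', inner_neg_right] at this
    have h0 : (inner ℂ x y : ℂ) = -(inner ℂ x y : ℂ) := this.symm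
    linear_combination h0 / 2
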